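/- Fix n ≥ 2 and let E_n = ⋃_{j∈[n]²} ∂B(x_j, 1/(2πn²)) with x_j = (k/(n+1), l/(n+1)) as above. Then for any α ∈ [2n⁻², 1) and any rectifiable curve Γ (compact connected set of finite H¹-measure) with H¹(Γ ∩ E_n) ≥ α, we have H¹(Γ) ≥ αn/128. -/

import Mathlib

open MeasureTheory Set Real
open scoped ENNReal NNReal

noncomputable section

abbrev Plane := EuclideanSpace ℝ (Fin 2)

def mk2 (a b : ℝ) : Plane := (WithLp.equiv 2 (Fin 2 → ℝ)).symm ![a, b]

/-- H¹ of a circle of radius r is at most 2πr. -/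
lemma sphere_H1_le (c : Plane) (r : ℝ) (hr : 0 < r) :
    μH[1] (Metric.sphere c r) ≤ ENNReal.ofReal (2 * π * r) := by
  set g : ℝ → Plane := fun θ => c + mk2 (r * Real.cos θ) (r * Real.sin θ) with hg
  have hlip : LipschitzWith r.toNNReal g := by
    apply LipschitzWith.of_dist_le_mul
    intro a b
    have hcoord : dist (g a) (g b)
        = Real.sqrt ((r * Real.cos a - r * Real.cos b)^2 + (r * Real.sin a - r * Real.sin b)^2) := by
      rw [EuclideanSpace.dist_eq, Fin.sum_univ_two]
      have h0 : dist ((g a) 0) ((g b) 0) = |r * Real.cos a - r * Real.cos b| := by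
        simp [hg, Real.dist_eq, mk2]
      have h1 : dist ((g a) 1) ((g b) 1) = |r * Real.sin a - r * Real.sin b| := by
        simp [hg, Real.dist_eq, mk2]
      rw [h0, h1, sq_abs, sq_abs]
    rw [hcoord]
    have key : (r * Real.cos a - r * Real.cos b)^2 + (r * Real.sin a - r * Real.sin b)^2
        ≤ (r * |a - b|)^2 := by
      have hc := Real.one_sub_sq_div_two_le_cos (x := a - b)
      have hcos : Real.cos (a - b) = Real.cos a * Real.cos b + Real.sin a * Real.sin b :=
        Real.cos_sub a b
      have ha2 := Real.sin_sq_add_cos_sq a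
      have hb2 := Real.sin_sq_add_cos_sq b
      have habs : |a - b|^2 = (a - b)^2 := sq_abs _
      nlinarith [sq_nonneg r, sq_nonneg (a - b)]
    calc Real.sqrt ((r * Real.cos a - r * Real.cos b)^2 + (r * Real.sin a - r * Real.sin b)^2)
        ≤ Real.sqrt ((r * |a - b|)^2) := Real.sqrt_le_sqrt key
      _ = r * |a - b| := Real.sqrt_sq (by positivity)
      _ = ↑r.toNNReal * dist a b := by
          rw [Real.dist_eq, Real.coe_toNNReal _ hr.le]
  have hsub : Metric.sphere c r ⊆ g '' Icc (-π) π := by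
    intro x hx
    have hd : dist x c = r := Metric.mem_sphere.mp hx
    set z : ℂ := ⟨x 0 - c 0, x 1 - c 1⟩ with hz
    have habs : ‖z‖ = r := by
      rw [← hd, EuclideanSpace.dist_eq, Fin.sum_univ_two, Complex.norm_def,
        Complex.normSq_apply]
      congr 1
      simp only [hz, Real.dist_eq, sq_abs]
      ring
    have hzne : z ≠ 0 := by
      intro h; rw [h] at habs; simp at habs; exact hr.ne' habs.symm
    refine ⟨Complex.arg z, ⟨(Complex.neg_pi_lt_arg z).le, Complex.arg_le_pi z⟩, ?_⟩
    have hcos : r * Real.cos (Complex.arg z) = x 0 - c 0 := by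
      rw [Complex.cos_arg hzne, habs]; field_simp [hz]; rfl
    have hsin : r * Real.sin (Complex.arg z) = x 1 - c 1 := by
      rw [Complex.sin_arg, habs]; field_simp [hz]; rfl
    ext i
    fin_cases i
    · show c 0 + r * Real.cos (Complex.arg z) = x 0; rw [hcos]; ring
    · show c 1 + r * Real.sin (Complex.arg z) = x 1; rw [hsin]; ring
  calc μH[1] (Metric.sphere c r) ≤ μH[1] (g '' Icc (-π) π) := measure_mono hsub
    _ ≤ (r.toNNReal : ℝ≥0∞) ^ (1:ℝ) * μH[1] (Icc (-π) π) :=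
        hlip.hausdorffMeasure_image_le zero_le_one _
    _ = ENNReal.ofReal r * ENNReal.ofReal (2 * π) := by
        rw [ENNReal.rpow_one, MeasureTheory.hausdorffMeasure_real, Real.volume_Icc]
        rw [show π - -π = 2 * π by ring]
        rfl
    _ = ENNReal.ofReal (2 * π * r) := by
        rw [← ENNReal.ofReal_mul hr.le]; ring_nf

/-- Lower bound: a preconnected set through x containing a point at distance ≥ e
has H¹ ≥ e inside the ball of radius e around x. -/
lemma conn_lb {Γ : Set Plane} (hconn : IsPreconnected Γ) {x y : Plane}
    (hx : x ∈ Γ) (hy : y ∈ Γ) {e : ℝ} (he : e ≤ dist x y) :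
    ENNReal.ofReal e ≤ μH[1] (Γ ∩ Metric.ball x e) := by
  rcases le_or_gt e 0 with h0 | h0
  · simp [ENNReal.ofReal_eq_zero.mpr h0]
  have hcont : Continuous (dist x) := Continuous.dist continuous_const continuous_id
  have hconn' : IsPreconnected (dist x '' Γ) := hconn.image _ hcont.continuousOn
  have h0' : (0:ℝ) ∈ dist x '' Γ := ⟨x, hx, dist_self x⟩
  have hd' : dist x y ∈ dist x '' Γ := ⟨y, hy, rfl⟩
  have hIcc : Icc 0 (dist x y) ⊆ dist x '' Γ := hconn'.Icc_subset h0' hd'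
  have hsub : Ico 0 e ⊆ dist x '' (Γ ∩ Metric.ball x e) := by
    rintro t ⟨ht0, hte⟩
    obtain ⟨z, hz, hzt⟩ := hIcc ⟨ht0, le_trans hte.le he⟩
    exact ⟨z, ⟨hz, by rw [Metric.mem_ball, dist_comm, hzt]; exact hte⟩, hzt⟩
  calc ENNReal.ofReal e = μH[1] (Ico 0 e) := by
        rw [MeasureTheory.hausdorffMeasure_real, Real.volume_Ico, sub_zero]
    _ ≤ μH[1] (dist x '' (Γ ∩ Metric.ball x e)) := measure_mono hsub
    _ ≤ μH[1] (Γ ∩ Metric.ball x e) := by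
        simpa using (LipschitzWith.dist_right x).hausdorffMeasure_image_le zero_le_one
          (Γ ∩ Metric.ball x e)

lemma coord_le_dist (x y : Plane) (i : Fin 2) : dist (x i) (y i) ≤ dist x y := by
  rw [EuclideanSpace.dist_eq, Fin.sum_univ_two]
  fin_cases i
  · have h := Real.sqrt_le_sqrt (show dist (x 0) (y 0)^2 ≤ dist (x 0) (y 0)^2 + dist (x 1) (y 1)^2
      by nlinarith [sq_nonneg (dist (x 1) (y 1))])
    rwa [Real.sqrt_sq dist_nonneg] at h
  · have h := Real.sqrt_le_sqrt (show dist (x 1) (y 1)^2 ≤ dist (x 0) (y 0)^2 + dist (x 1) (y 1)^2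
      by nlinarith [sq_nonneg (dist (x 0) (y 0))])
    rwa [Real.sqrt_sq dist_nonneg] at h

/-- Orthogonal projection onto direction (cos θ, sin θ). -/
def proj (θ : ℝ) (x : Plane) : ℝ := x 0 * Real.cos θ + x 1 * Real.sin θ

/-- Favard length. -/
def Fav (E : Set Plane) : ℝ≥0∞ := ∫⁻ θ in Set.Ioo 0 Real.pi, μH[1] (proj θ '' E)

/-- Grid points x_j, j ∈ [n]². -/
def gridPt (n : ℕ) (j : Fin n × Fin n) : Plane :=
  mk2 (((j.1 : ℝ) + 1) / (n + 1)) (((j.2 : ℝ) + 1) / (n + 1))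

/-- The circles S_j of radius 1/(2πn²). -/
def gridCircle (n : ℕ) (j : Fin n × Fin n) : Set Plane :=
  Metric.sphere (gridPt n j) (1 / (2 * Real.pi * n ^ 2))

/-- The closed discs B_j. -/
def gridBall (n : ℕ) (j : Fin n × Fin n) : Set Plane :=
  Metric.closedBall (gridPt n j) (1 / (2 * Real.pi * n ^ 2))

/-- E_n: union of the n² circles. -/
def gridSet (n : ℕ) : Set Plane := ⋃ j, gridCircle n j

lemma fin_cast_sep {n : ℕ} {a b : Fin n} (h : a ≠ b) : (1:ℝ) ≤ |(a:ℝ) - (b:ℝ)| := by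
  have hz : ((a:ℤ) - (b:ℤ)) ≠ 0 := by
    have : (a:ℕ) ≠ (b:ℕ) := fun hab => h (Fin.ext hab)
    omega
  have h1 : (1:ℤ) ≤ |(a:ℤ) - (b:ℤ)| := Int.one_le_abs hz
  calc (1:ℝ) ≤ ((|(a:ℤ) - (b:ℤ)| : ℤ) : ℝ) := by exact_mod_cast h1
    _ = |(a:ℝ) - (b:ℝ)| := by push_cast; rfl

lemma grid_sep (n : ℕ) {j j' : Fin n × Fin n} (h : j ≠ j') :
    1 / ((n:ℝ) + 1) ≤ dist (gridPt n j) (gridPt n j') := by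
  have hn1 : (0:ℝ) < (n:ℝ) + 1 := by positivity
  have key : ∀ (a b : Fin n), a ≠ b →
      1 / ((n:ℝ) + 1) ≤ dist ((((a:ℝ)+1)/((n:ℝ)+1)) : ℝ) ((((b:ℝ)+1)/((n:ℝ)+1)) : ℝ) := by
    intro a b hab
    rw [Real.dist_eq, show ((a:ℝ)+1)/((n:ℝ)+1) - ((b:ℝ)+1)/((n:ℝ)+1) = ((a:ℝ)-(b:ℝ))/((n:ℝ)+1)
      by ring, abs_div, abs_of_pos hn1]
    gcongr
    exact fin_cast_sep hab
  by_cases h1 : j.1 = j'.1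
  · have h2 : j.2 ≠ j'.2 := fun h2 => h (Prod.ext h1 h2)
    exact le_trans (key _ _ h2) (coord_le_dist (gridPt n j) (gridPt n j') 1)
  · exact le_trans (key _ _ h1) (coord_le_dist (gridPt n j) (gridPt n j') 0)

/-- A curve meeting the grid set in length α has length ≥ αn/128. -/
theorem stmt16 (n : ℕ) (hn : 2 ≤ n) (α : ℝ) (hα : α ∈ Set.Ico (2 / (n : ℝ) ^ 2) 1)
    (Γ : Set Plane) (hc : IsCompact Γ) (hconn : IsConnected Γ) (hfin : μH[1] Γ < ⊤)
    (hint : ENNReal.ofReal α ≤ μH[1] (Γ ∩ gridSet n)) :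
    ENNReal.ofReal (α * n / 128) ≤ μH[1] Γ := by
  classical
  have hN : (2:ℝ) ≤ (n:ℝ) := by exact_mod_cast hn
  have hN0 : (0:ℝ) < (n:ℝ) := by linarith
  have hπ : (3:ℝ) < π := Real.pi_gt_three
  set r : ℝ := 1 / (2 * π * (n:ℝ) ^ 2) with hrdef
  have hr : 0 < r := by positivity
  have h2πr : 2 * π * r = 1 / (n:ℝ)^2 := by rw [hrdef]; field_simp
  have hα0 : 0 < α := lt_of_lt_of_le (by positivity) hα.1
  set S : Finset (Fin n × Fin n) :=
    Finset.univ.filter (fun j => (Γ ∩ gridCircle n j).Nonempty) with hSdef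
  -- Step 1: card bound
  have hsum : ENNReal.ofReal α ≤ ∑ j ∈ S, μH[1] (Γ ∩ gridCircle n j) := by
    refine hint.trans ?_
    rw [show Γ ∩ gridSet n = ⋃ j, Γ ∩ gridCircle n j by rw [gridSet, inter_iUnion]]
    refine (measure_iUnion_le _).trans ?_
    rw [tsum_fintype]
    refine le_of_eq (Finset.sum_subset (Finset.subset_univ S) ?_).symm
    intro j _ hj
    have hem : Γ ∩ gridCircle n j = ∅ := not_nonempty_iff_eq_empty.mp
      (by simpa [hSdef, Finset.mem_filter] using hj)
    simp [hem]
  have hterm : ∀ j ∈ S, μH[1] (Γ ∩ gridCircle n j) ≤ ENNReal.ofReal (1/(n:ℝ)^2) := by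
    intro j _
    refine (measure_mono inter_subset_right).trans ?_
    rw [gridCircle, ← h2πr]
    exact sphere_H1_le (gridPt n j) r hr
  have hcard1 : ENNReal.ofReal α ≤ ENNReal.ofReal ((S.card : ℝ) * (1/(n:ℝ)^2)) := by
    refine hsum.trans ?_
    calc ∑ j ∈ S, μH[1] (Γ ∩ gridCircle n j)
        ≤ S.card • ENNReal.ofReal (1/(n:ℝ)^2) := Finset.sum_le_card_nsmul _ _ _ hterm
      _ = (S.card : ℝ≥0∞) * ENNReal.ofReal (1/(n:ℝ)^2) := nsmul_eq_mul _ _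
      _ = ENNReal.ofReal ((S.card : ℝ) * (1/(n:ℝ)^2)) := by
          rw [ENNReal.ofReal_mul (by positivity), ENNReal.ofReal_natCast]
  have hcardR : α * (n:ℝ)^2 ≤ (S.card : ℝ) := by
    have h := (ENNReal.ofReal_le_ofReal_iff (by positivity)).mp hcard1
    have hinv : (1/(n:ℝ)^2) * (n:ℝ)^2 = 1 := by field_simp
    nlinarith [mul_le_mul_of_nonneg_right h (sq_nonneg (n:ℝ))]
  have hcard2 : 2 ≤ S.card := by
    have h2 : (2:ℝ) ≤ α * (n:ℝ)^2 := by
      have := hα.1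
      have hpos : (0:ℝ) < (n:ℝ)^2 := by positivity
      calc (2:ℝ) = (2/(n:ℝ)^2) * (n:ℝ)^2 := by field_simp
        _ ≤ α * (n:ℝ)^2 := mul_le_mul_of_nonneg_right hα.1 hpos.le
    exact_mod_cast le_trans h2 hcardR
  -- Step 2: points
  set p : Fin n × Fin n → Plane :=
    fun j => if h : (Γ ∩ gridCircle n j).Nonempty then h.choose else gridPt n j with hpdef
  have hpΓ : ∀ j ∈ S, p j ∈ Γ ∧ dist (p j) (gridPt n j) = r := by
    intro j hj
    have h : (Γ ∩ gridCircle n j).Nonempty := by simpa [hSdef, Finset.mem_filter] using hj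
    rw [hpdef]; simp only [dif_pos h]
    obtain ⟨h1, h2⟩ := h.choose_spec
    exact ⟨h1, Metric.mem_sphere.mp h2⟩
  -- Step 3: separation
  have hsep : ∀ j ∈ S, ∀ j' ∈ S, j ≠ j' → 1/(2*(n:ℝ)) ≤ dist (p j) (p j') := by
    intro j hj j' hj' hne
    have hg := grid_sep n hne
    have ht : dist (gridPt n j) (gridPt n j') ≤ r + dist (p j) (p j') + r := by
      calc dist (gridPt n j) (gridPt n j')
          ≤ dist (gridPt n j) (p j) + dist (p j) (p j') + dist (p j') (gridPt n j') :=
            dist_triangle4 _ _ _ _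
        _ = r + dist (p j) (p j') + r := by
            rw [dist_comm (gridPt n j) (p j), (hpΓ j hj).2, (hpΓ j' hj').2]
    have hnum : 1/(2*(n:ℝ)) + 2*r ≤ 1/((n:ℝ)+1) := by
      have h1 : 1/((n:ℝ)+1) - 1/(2*(n:ℝ)) = ((n:ℝ)-1)/(2*(n:ℝ)*((n:ℝ)+1)) := by
        field_simp; ring
      have h2 : 2*r ≤ 1/(3*(n:ℝ)^2) := by
        rw [hrdef]
        rw [show 2 * (1 / (2 * π * (n:ℝ)^2)) = 1/(π*(n:ℝ)^2) by field_simp]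
        exact one_div_le_one_div_of_le (by positivity) (by nlinarith)
      have h3 : 1/(3*(n:ℝ)^2) ≤ ((n:ℝ)-1)/(2*(n:ℝ)*((n:ℝ)+1)) := by
        rw [div_le_div_iff₀ (by positivity) (by positivity)]
        nlinarith [sq_nonneg (n:ℝ), hN]
      linarith
    linarith
  -- Step 4: ball lower bounds
  set e : ℝ := 1/(4*(n:ℝ)) with hedef
  have he0 : 0 < e := by positivity
  have hee : e + e = 1/(2*(n:ℝ)) := by rw [hedef]; field_simp; ring
  have hballs : ∀ j ∈ S, ENNReal.ofReal e ≤ μH[1] (Γ ∩ Metric.ball (p j) e) := by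
    intro j hj
    obtain ⟨j', hj', hne⟩ := Finset.exists_mem_ne (show 1 < S.card by omega) j
    refine conn_lb hconn.isPreconnected (hpΓ j hj).1 (hpΓ j' hj').1 ?_
    calc e ≤ 1/(2*(n:ℝ)) := by linarith
      _ ≤ dist (p j) (p j') := hsep j hj j' hj' (Ne.symm hne)
  have hdisj : (S : Set (Fin n × Fin n)).PairwiseDisjoint
      (fun j => Γ ∩ Metric.ball (p j) e) := by
    intro j hj j' hj' hne
    refine Disjoint.mono inter_subset_right inter_subset_right ?_
    apply Metric.ball_disjoint_ball
    rw [hee]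
    exact hsep j (by simpa using hj) j' (by simpa using hj') hne
  have hmeas : ∀ j ∈ S, MeasurableSet (Γ ∩ Metric.ball (p j) e) := fun j _ =>
    hc.isClosed.measurableSet.inter Metric.isOpen_ball.measurableSet
  -- Step 5: conclude
  have hfinal : α * n / 128 ≤ (S.card : ℝ) * e := by
    have h1 : α * (n:ℝ)^2 * e ≤ (S.card : ℝ) * e := mul_le_mul_of_nonneg_right hcardR he0.le
    have h2 : α * (n:ℝ)^2 * e = α * (n:ℝ) / 4 := by rw [hedef]; field_simp
    nlinarith [mul_nonneg hα0.le hN0.le]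
  calc ENNReal.ofReal (α * n / 128) ≤ ENNReal.ofReal ((S.card : ℝ) * e) :=
        ENNReal.ofReal_le_ofReal hfinal
    _ = ∑ _j ∈ S, ENNReal.ofReal e := by
        rw [Finset.sum_const, nsmul_eq_mul, ENNReal.ofReal_mul (by positivity),
          ENNReal.ofReal_natCast]
    _ ≤ ∑ j ∈ S, μH[1] (Γ ∩ Metric.ball (p j) e) := Finset.sum_le_sum hballs
    _ = μH[1] (⋃ j ∈ S, Γ ∩ Metric.ball (p j) e) :=
        (measure_biUnion_finset hdisj hmeas).symm
    _ ≤ μH[1] Γ := measure_mono (iUnion₂_subset fun j _ => inter_subset_left)
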